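/- Let f : ℝ → ℝ be differentiable with f > 0 such that f'/f is differentiable and satisfies (f'/f)'(y) < (Φ''/Φ')'(y) for all y ∈ ℝ, and suppose y∞ ∈ ℝ satisfies (f'/f)(y∞) = (Φ''/Φ')(y∞). Then M₂(y∞) = 0, M₂(y) > 0 for every y > y∞, and M₂(y) < 0 for every y < y∞. -/

import Mathlib

open MeasureTheory Real Filter

/-- `Fa a x = ∫₀^∞ exp(-t² - 2xt) · t^a dt`, a Hermite-type function of negative degree. -/
noncomputable def Fa (a x : ℝ) : ℝ :=
  ∫ t in Set.Ioi (0 : ℝ), Real.exp (-(t ^ 2) - 2 * x * t) * t ^ a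

/-- `Phi β σh δ c x = F_a(u(x))` with `a = δ/β - 1` and `u(x) = (c - βx)/(√β·σ̂)`. -/
noncomputable def Phi (β σh δ c : ℝ) (x : ℝ) : ℝ :=
  Fa (δ / β - 1) ((c - β * x) / (Real.sqrt β * σh))

/-- `M₁ = (f·Φ' - f'·Φ)/D` with `D = (Φ')² - Φ·Φ''`. -/
noncomputable def M1 (β σh δ c : ℝ) (f : ℝ → ℝ) (y : ℝ) : ℝ :=
  (f y * deriv (Phi β σh δ c) y - deriv f y * Phi β σh δ c y) /
    ((deriv (Phi β σh δ c) y) ^ 2 - Phi β σh δ c y * deriv (deriv (Phi β σh δ c)) y)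

/-- `M₂ = (f'·Φ' - f·Φ'')/D` with `D = (Φ')² - Φ·Φ''`. -/
noncomputable def M2 (β σh δ c : ℝ) (f : ℝ → ℝ) (y : ℝ) : ℝ :=
  (deriv f y * deriv (Phi β σh δ c) y - f y * deriv (deriv (Phi β σh δ c)) y) /
    ((deriv (Phi β σh δ c) y) ^ 2 - Phi β σh δ c y * deriv (deriv (Phi β σh δ c)) y)


section Aux
open Set

lemma key_bound (z : ℝ) {t : ℝ} (ht : 0 < t) {R : ℝ} (hz : |z| ≤ R) :
    Real.exp (-(t ^ 2) - 2 * z * t) ≤ Real.exp (2 * R ^ 2) * Real.exp (-(1/2) * t ^ 2) := by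
  rw [← Real.exp_add]
  apply Real.exp_le_exp.mpr
  have h1 : -(2 * z * t) ≤ 2 * |z| * t := by
    have := abs_le.mp (le_refl |z|)
    nlinarith [neg_abs_le z, ht.le]
  nlinarith [sq_nonneg (t - 2 * |z|), abs_nonneg z, ht.le]

lemma integrableOn_Fa {a : ℝ} (ha : -1 < a) (z : ℝ) :
    IntegrableOn (fun t => Real.exp (-(t ^ 2) - 2 * z * t) * t ^ a) (Set.Ioi (0:ℝ)) := by
  have hmaj : IntegrableOn (fun t : ℝ => Real.exp (2 * |z| ^ 2) * (t ^ a * Real.exp (-(1/2) * t ^ 2))) (Set.Ioi (0:ℝ)) :=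
    (integrableOn_rpow_mul_exp_neg_mul_sq (by norm_num) ha).const_mul _
  apply hmaj.mono'
  · apply ContinuousOn.aestronglyMeasurable _ measurableSet_Ioi
    exact (Real.continuous_exp.comp (by continuity)).continuousOn.mul
      (fun t ht => (Real.continuousAt_rpow_const t a (Or.inl (ne_of_gt ht))).continuousWithinAt)
  · filter_upwards [ae_restrict_mem measurableSet_Ioi] with t ht
    have h1 : (0:ℝ) < t := ht
    rw [Real.norm_eq_abs, abs_of_nonneg (by positivity)]
    have := key_bound z h1 (le_refl |z|)
    have h2 : (0:ℝ) ≤ t ^ a := (Real.rpow_pos_of_pos h1 a).le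
    calc Real.exp (-(t ^ 2) - 2 * z * t) * t ^ a
        ≤ (Real.exp (2 * |z| ^ 2) * Real.exp (-(1/2) * t ^ 2)) * t ^ a := by
          exact mul_le_mul_of_nonneg_right this h2
      _ = Real.exp (2 * |z| ^ 2) * (t ^ a * Real.exp (-(1/2) * t ^ 2)) := by ring

lemma Fa_pos {a : ℝ} (ha : -1 < a) (z : ℝ) : 0 < Fa a z := by
  rw [Fa]
  rw [setIntegral_pos_iff_support_of_nonneg_ae]
  · have : Function.support (fun t : ℝ => Real.exp (-(t ^ 2) - 2 * z * t) * t ^ a) ∩ Set.Ioi 0 = Set.Ioi 0 := by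
      ext t; simp only [Set.mem_inter_iff, Function.mem_support, Set.mem_Ioi]
      constructor
      · rintro ⟨_, h⟩; exact h
      · intro ht; refine ⟨?_, ht⟩
        positivity
    rw [this]; simp
  · filter_upwards [ae_restrict_mem measurableSet_Ioi] with t ht
    have : (0:ℝ) < t := ht
    positivity
  · exact integrableOn_Fa ha z

lemma rpow_succ_on {t : ℝ} (ht : 0 < t) (a : ℝ) : t ^ (a + 1) = t * t ^ a := by
  rw [Real.rpow_add ht, Real.rpow_one]; ring

lemma hasDerivAt_Fa {a : ℝ} (ha : -1 < a) (z : ℝ) :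
    HasDerivAt (Fa a) (-2 * Fa (a + 1) z) z := by
  have ha1 : (-1:ℝ) < a + 1 := by linarith
  set μ := volume.restrict (Set.Ioi (0:ℝ))
  have meas : ∀ b : ℝ, -1 < b → ∀ x : ℝ,
      AEStronglyMeasurable (fun t => Real.exp (-(t ^ 2) - 2 * x * t) * t ^ b) μ :=
    fun b hb x => (integrableOn_Fa hb x).aestronglyMeasurable
  have key := hasDerivAt_integral_of_dominated_loc_of_deriv_le
    (F := fun x t => Real.exp (-(t ^ 2) - 2 * x * t) * t ^ a)
    (F' := fun x t => (-2) * (Real.exp (-(t ^ 2) - 2 * x * t) * t ^ (a+1)))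
    (x₀ := z) (μ := μ)
    (bound := fun t => 2 * Real.exp (2 * (|z|+1) ^ 2) * (t ^ (a+1) * Real.exp (-(1/2) * t ^ 2)))
    (s := Metric.ball z 1) (Metric.ball_mem_nhds z one_pos)
    (Eventually.of_forall fun x => meas a ha x)
    (integrableOn_Fa ha z)
    (((meas (a+1) ha1 z)).const_mul _)
    ?_ ?_ ?_
  · have h1 : (∫ t, (-2) * (Real.exp (-(t ^ 2) - 2 * z * t) * t ^ (a+1)) ∂μ)
        = -2 * Fa (a+1) z := by
      rw [integral_const_mul]; rfl
    rw [h1] at key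
    exact key.2
  · filter_upwards [ae_restrict_mem measurableSet_Ioi] with t ht x hx
    have h1 : (0:ℝ) < t := ht
    have hxz : |x| ≤ |z| + 1 := by
      have := mem_ball_iff_norm.mp hx
      rw [Real.norm_eq_abs] at this
      have := abs_sub_abs_le_abs_sub x z
      linarith
    have hb := key_bound x h1 hxz
    rw [Real.norm_eq_abs, abs_mul, abs_mul]
    have h2 : (0:ℝ) < t ^ (a+1) := Real.rpow_pos_of_pos h1 _
    rw [abs_of_nonneg (Real.exp_pos _).le, abs_of_nonneg h2.le]
    have : |(-2:ℝ)| = 2 := by norm_num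
    rw [this]
    calc 2 * (Real.exp (-(t ^ 2) - 2 * x * t) * t ^ (a+1))
        ≤ 2 * ((Real.exp (2 * (|z|+1) ^ 2) * Real.exp (-(1/2) * t ^ 2)) * t ^ (a+1)) := by
          apply mul_le_mul_of_nonneg_left _ (by norm_num)
          exact mul_le_mul_of_nonneg_right hb h2.le
      _ = 2 * Real.exp (2 * (|z|+1) ^ 2) * (t ^ (a+1) * Real.exp (-(1/2) * t ^ 2)) := by ring
  · exact ((integrableOn_rpow_mul_exp_neg_mul_sq (by norm_num) ha1).const_mul _)
  · filter_upwards [ae_restrict_mem measurableSet_Ioi] with t ht x hx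
    have h1 : (0:ℝ) < t := ht
    have hd : HasDerivAt (fun x : ℝ => Real.exp (-(t ^ 2) - 2 * x * t))
        ((-2 * t) * Real.exp (-(t ^ 2) - 2 * x * t)) x := by
      have h3 : HasDerivAt (fun x : ℝ => -(t ^ 2) - 2 * x * t) (-2 * t) x := by
        simpa using ((hasDerivAt_id x).const_mul (2:ℝ)).mul_const t |>.const_sub (-(t^2))
      exact ((Real.hasDerivAt_exp _).comp x h3).congr_deriv (by ring)
    have := hd.mul_const (t ^ a)
    refine this.congr_deriv ?_
    rw [rpow_succ_on h1]
    ring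

lemma Fa_sq_lt {a : ℝ} (ha : -1 < a) (z : ℝ) :
    Fa (a + 1) z ^ 2 < Fa a z * Fa (a + 2) z := by
  have ha1 : (-1:ℝ) < a + 1 := by linarith
  have ha2 : (-1:ℝ) < a + 2 := by linarith
  have h0 := Fa_pos ha z
  set l := Fa (a+1) z / Fa a z with hl
  have key : 0 < ∫ t in Set.Ioi (0:ℝ),
      (t - l) ^ 2 * (Real.exp (-(t ^ 2) - 2 * z * t) * t ^ a) := by
    rw [setIntegral_pos_iff_support_of_nonneg_ae]
    · have hsub : Set.Ioi (0:ℝ) \ {l} ⊆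
          Function.support (fun t : ℝ => (t - l) ^ 2 * (Real.exp (-(t ^ 2) - 2 * z * t) * t ^ a)) ∩ Set.Ioi 0 := by
        rintro t ⟨ht, htl⟩
        have h1 : (0:ℝ) < t := ht
        have h2 : t - l ≠ 0 := sub_ne_zero.mpr (by simpa using htl)
        refine ⟨?_, ht⟩
        simp only [Function.mem_support]
        have h3 : (0:ℝ) < t ^ a := Real.rpow_pos_of_pos h1 a
        positivity
      calc (0:ENNReal) < ⊤ := by simp
        _ = volume (Set.Ioi (0:ℝ) \ {l}) := by
            rw [measure_diff_null (measure_singleton l)]; simp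
        _ ≤ _ := measure_mono hsub
    · filter_upwards [ae_restrict_mem measurableSet_Ioi] with t ht
      have h1 : (0:ℝ) < t := ht
      have h3 : (0:ℝ) < t ^ a := Real.rpow_pos_of_pos h1 a
      positivity
    · -- integrability of the expanded integrand
      have hI0 := integrableOn_Fa ha z
      have hI1 := integrableOn_Fa ha1 z
      have hI2 := integrableOn_Fa ha2 z
      have : IntegrableOn (fun t : ℝ =>
          Real.exp (-(t ^ 2) - 2 * z * t) * t ^ (a+2)
          - (2*l) * (Real.exp (-(t ^ 2) - 2 * z * t) * t ^ (a+1))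
          + l^2 * (Real.exp (-(t ^ 2) - 2 * z * t) * t ^ a)) (Set.Ioi (0:ℝ)) :=
        (hI2.sub (hI1.const_mul _)).add (hI0.const_mul _)
      apply this.congr_fun _ measurableSet_Ioi
      intro t ht
      have h1 : (0:ℝ) < t := ht
      dsimp only
      rw [show a + 2 = (a+1) + 1 by ring, rpow_succ_on h1, rpow_succ_on h1]
      ring
  have hexp : (∫ t in Set.Ioi (0:ℝ),
      (t - l) ^ 2 * (Real.exp (-(t ^ 2) - 2 * z * t) * t ^ a))
      = Fa (a+2) z - 2*l * Fa (a+1) z + l^2 * Fa a z := by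
    have hI0 := integrableOn_Fa ha z
    have hI1 := integrableOn_Fa ha1 z
    have hI2 := integrableOn_Fa ha2 z
    rw [show (∫ t in Set.Ioi (0:ℝ),
        (t - l) ^ 2 * (Real.exp (-(t ^ 2) - 2 * z * t) * t ^ a))
        = ∫ t in Set.Ioi (0:ℝ),
          (Real.exp (-(t ^ 2) - 2 * z * t) * t ^ (a+2)
          - (2*l) * (Real.exp (-(t ^ 2) - 2 * z * t) * t ^ (a+1))
          + l^2 * (Real.exp (-(t ^ 2) - 2 * z * t) * t ^ a)) from ?_]
    · have hIsub : IntegrableOn (fun t : ℝ =>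
          Real.exp (-(t ^ 2) - 2 * z * t) * t ^ (a+2)
          - (2*l) * (Real.exp (-(t ^ 2) - 2 * z * t) * t ^ (a+1))) (Set.Ioi (0:ℝ)) :=
        hI2.sub (hI1.const_mul _)
      rw [integral_add hIsub (hI0.const_mul _),
        integral_sub hI2 (hI1.const_mul _), integral_const_mul, integral_const_mul]
      rfl
    · apply setIntegral_congr_fun measurableSet_Ioi
      intro t ht
      have h1 : (0:ℝ) < t := ht
      dsimp only
      rw [show a + 2 = (a+1) + 1 by ring, rpow_succ_on h1, rpow_succ_on h1]
      ring
  rw [hexp, hl] at key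
  have h2 : Fa a z ≠ 0 := ne_of_gt h0
  have e1 : Fa a z * (Fa (a + 2) z - 2 * (Fa (a + 1) z / Fa a z) * Fa (a + 1) z
      + (Fa (a+1) z / Fa a z)^2 * Fa a z)
      = Fa a z * Fa (a+2) z - Fa (a+1) z ^ 2 := by
    field_simp
    ring
  nlinarith [mul_pos h0 key]

end Aux

/-- Sign of `M₂`: at the point `y∞` where `f'/f = Φ''/Φ'` one has `M₂(y∞) = 0`, with
`M₂ > 0` to the right and `M₂ < 0` to the left of `y∞`. -/
theorem sign_of_M2 (β σh δ c : ℝ) (hβ : 0 < β) (hσ : 0 < σh) (hδ : 0 < δ)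
    (f : ℝ → ℝ) (hf : Differentiable ℝ f) (hfpos : ∀ y : ℝ, 0 < f y)
    (hdiff : Differentiable ℝ (fun z => deriv f z / f z))
    (hratio : ∀ y : ℝ, deriv (fun z => deriv f z / f z) y <
      deriv (fun z => deriv (deriv (Phi β σh δ c)) z / deriv (Phi β σh δ c) z) y)
    (yinf : ℝ)
    (hroot : deriv f yinf / f yinf =
      deriv (deriv (Phi β σh δ c)) yinf / deriv (Phi β σh δ c) yinf) :
    M2 β σh δ c f yinf = 0 ∧
    (∀ y : ℝ, yinf < y → 0 < M2 β σh δ c f y) ∧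
    (∀ y : ℝ, y < yinf → M2 β σh δ c f y < 0) := by
  set a : ℝ := δ / β - 1 with ha_def
  have ha : (-1:ℝ) < a := by
    have : 0 < δ / β := div_pos hδ hβ
    rw [ha_def]; linarith
  have ha1 : (-1:ℝ) < a + 1 := by linarith
  have ha2 : (-1:ℝ) < a + 2 := by linarith
  set m : ℝ := -β / (Real.sqrt β * σh) with hm_def
  have hsβ : 0 < Real.sqrt β := Real.sqrt_pos.mpr hβ
  have hm : m < 0 := by
    rw [hm_def]
    apply div_neg_of_neg_of_pos (by linarith) (by positivity)
  have hm2 : 0 < m ^ 2 := by nlinarith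
  set u : ℝ → ℝ := fun x => (c - β * x) / (Real.sqrt β * σh) with hu_def
  have hu : ∀ x, HasDerivAt u m x := by
    intro x
    have h1 : HasDerivAt (fun x : ℝ => c - β * x) (-β) x := by
      simpa using ((hasDerivAt_id x).const_mul β).const_sub c
    exact h1.div_const (Real.sqrt β * σh)
  have hPhi : ∀ x, Phi β σh δ c x = Fa a (u x) := fun x => rfl
  have hd1 : ∀ x, HasDerivAt (Phi β σh δ c) ((-2 * m) * Fa (a+1) (u x)) x := by
    intro x
    have h1 := (hasDerivAt_Fa ha (u x)).comp x (hu x)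
    have h2 : Phi β σh δ c = Fa a ∘ u := funext hPhi
    rw [h2]
    refine h1.congr_deriv ?_
    ring
  have hderivPhi : deriv (Phi β σh δ c) = fun x => (-2 * m) * Fa (a+1) (u x) :=
    funext fun x => (hd1 x).deriv
  have hd2 : ∀ x, HasDerivAt (fun x => (-2 * m) * Fa (a+1) (u x))
      ((4 * m^2) * Fa (a+2) (u x)) x := by
    intro x
    have h1 := (((hasDerivAt_Fa ha1 (u x)).comp x (hu x)).const_mul (-2*m))
    refine h1.congr_deriv ?_
    rw [show a + 2 = a + 1 + 1 by ring]
    ring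
  have hderiv2 : ∀ x, deriv (deriv (Phi β σh δ c)) x = (4 * m^2) * Fa (a+2) (u x) := by
    intro x; rw [hderivPhi]; exact (hd2 x).deriv
  have hApos : ∀ y, 0 < deriv (Phi β σh δ c) y := by
    intro y
    rw [hderivPhi]
    dsimp only
    have h1 := Fa_pos ha1 (u y)
    nlinarith
  have hBpos : ∀ y, 0 < deriv (deriv (Phi β σh δ c)) y := by
    intro y
    rw [hderiv2 y]
    have h1 := Fa_pos ha2 (u y)
    nlinarith
  have hD : ∀ y, (deriv (Phi β σh δ c) y)^2
      - Phi β σh δ c y * deriv (deriv (Phi β σh δ c)) y < 0 := by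
    intro y
    rw [hderiv2 y, hderivPhi, hPhi y]
    dsimp only
    have h1 := Fa_sq_lt ha (u y)
    nlinarith [mul_lt_mul_of_pos_left h1 hm2]
  -- differentiability of Φ''/Φ'
  have hHfun : (fun z => deriv (deriv (Phi β σh δ c)) z / deriv (Phi β σh δ c) z)
      = fun z => ((4*m^2) * Fa (a+2) (u z)) / ((-2*m) * Fa (a+1) (u z)) := by
    funext z; rw [hderiv2 z, hderivPhi]
  have hHdiff : Differentiable ℝ
      (fun z => deriv (deriv (Phi β σh δ c)) z / deriv (Phi β σh δ c) z) := by
    rw [hHfun]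
    apply Differentiable.div
    · exact fun z => (((hasDerivAt_Fa ha2 (u z)).comp z (hu z)).const_mul (4*m^2)).differentiableAt
    · exact fun z => (((hasDerivAt_Fa ha1 (u z)).comp z (hu z)).const_mul (-2*m)).differentiableAt
    · intro z
      have h1 := Fa_pos ha1 (u z)
      nlinarith
  -- strict monotonicity of φ = Φ''/Φ' - f'/f
  have hmono : StrictMono (fun y : ℝ =>
      deriv (deriv (Phi β σh δ c)) y / deriv (Phi β σh δ c) y - deriv f y / f y) := by
    apply strictMono_of_deriv_pos
    intro y
    rw [deriv_fun_sub (hHdiff y) (hdiff y)]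
    linarith [hratio y]
  have hzero : deriv (deriv (Phi β σh δ c)) yinf / deriv (Phi β σh δ c) yinf
      - deriv f yinf / f yinf = 0 := by rw [← hroot]; ring
  -- numerator identity
  have hnum : ∀ y, deriv f y * deriv (Phi β σh δ c) y
      - f y * deriv (deriv (Phi β σh δ c)) y
      = -(f y * deriv (Phi β σh δ c) y) *
        (deriv (deriv (Phi β σh δ c)) y / deriv (Phi β σh δ c) y - deriv f y / f y) := by
    intro y
    have hA := (hApos y).ne'
    have hfy := (hfpos y).ne'
    field_simp
    ring
  have hM2 : ∀ y, M2 β σh δ c f y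
      = (-(f y * deriv (Phi β σh δ c) y) *
        (deriv (deriv (Phi β σh δ c)) y / deriv (Phi β σh δ c) y - deriv f y / f y)) /
        ((deriv (Phi β σh δ c) y) ^ 2 - Phi β σh δ c y * deriv (deriv (Phi β σh δ c)) y) := by
    intro y; rw [M2, hnum y]
  refine ⟨?_, ?_, ?_⟩
  · rw [hM2, hzero]
    simp
  · intro y hy
    have hφ : 0 < deriv (deriv (Phi β σh δ c)) y / deriv (Phi β σh δ c) y
        - deriv f y / f y := by
      have := hmono hy
      simp only at this
      linarith [hzero]
    rw [hM2]
    apply div_pos_of_neg_of_neg _ (hD y)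
    have h1 : 0 < f y * deriv (Phi β σh δ c) y := mul_pos (hfpos y) (hApos y)
    nlinarith
  · intro y hy
    have hφ : deriv (deriv (Phi β σh δ c)) y / deriv (Phi β σh δ c) y
        - deriv f y / f y < 0 := by
      have := hmono hy
      simp only at this
      linarith [hzero]
    rw [hM2]
    apply div_neg_of_pos_of_neg _ (hD y)
    have h1 : 0 < f y * deriv (Phi β σh δ c) y := mul_pos (hfpos y) (hApos y)
    nlinarith
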